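/- Consistency and g-monotonicity of the Godunov-type operator F̂₅: Let F : ℝ × ℝ → ℝ with p ↦ F(p,x) continuous for each x. Define F̂₅(p₁,p₂,p₃,x) as follows: if p₂ ≥ max{p₁,p₃}, F̂₅ := min of F(·,x) over the interval [min{p₁,p₂,p₃}, max{p₁,p₂,p₃}]; if p₂ ≤ min{p₁,p₃}, F̂₅ := max of F(·,x) over [min{p₁,p₂,p₃}, max{p₁,p₂,p₃}]; if p₁ < p₂ < p₃, F̂₅ := max of F(·,x) over [p₂,p₃]; if p₃ < p₂ < p₁, F̂₅ := max of F(·,x) over [p₂,p₁]. Then (i) F̂₅(p,p,p,x) = F(p,x) for all p, x (consistency), and (ii) F̂₅ is g-monotone: for each fixed remaining arguments, F̂₅ is nondecreasing in p₁, nondecreasing in p₃, and nonincreasing in p₂. -/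

import Mathlib

/-- The Godunov-type numerical operator `F̂₅` (formula (4.9)–(4.10)):
if `p₂ ≥ max{p₁,p₃}`, the minimum of `F(·,x)` over `I(p₁,p₂,p₃)`;
if `p₂ ≤ min{p₁,p₃}`, the maximum of `F(·,x)` over `I(p₁,p₂,p₃)`;
if `p₁ < p₂ < p₃`, the maximum of `F(·,x)` over `[p₂,p₃]`;
if `p₃ < p₂ < p₁`, the maximum of `F(·,x)` over `[p₂,p₁]`.
Here `I(p₁,p₂,p₃) = [min{p₁,p₂,p₃}, max{p₁,p₂,p₃}]`. -/
noncomputable def godunovOp5 (F : ℝ → ℝ → ℝ) (p₁ p₂ p₃ x : ℝ) : ℝ :=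
  if max p₁ p₃ ≤ p₂ then
    sInf ((fun p => F p x) '' Set.Icc (min p₁ (min p₂ p₃)) (max p₁ (max p₂ p₃)))
  else if p₂ ≤ min p₁ p₃ then
    sSup ((fun p => F p x) '' Set.Icc (min p₁ (min p₂ p₃)) (max p₁ (max p₂ p₃)))
  else if p₁ < p₂ ∧ p₂ < p₃ then
    sSup ((fun p => F p x) '' Set.Icc p₂ p₃)
  else
    sSup ((fun p => F p x) '' Set.Icc p₂ p₁)

private lemma img_bddBelow (f : ℝ → ℝ) (hf : Continuous f) (a b : ℝ) :
    BddBelow (f '' Set.Icc a b) := (isCompact_Icc.image hf).bddBelow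

private lemma img_bddAbove (f : ℝ → ℝ) (hf : Continuous f) (a b : ℝ) :
    BddAbove (f '' Set.Icc a b) := (isCompact_Icc.image hf).bddAbove

private lemma inf_mono' {f : ℝ → ℝ} (hf : Continuous f) {a b c d : ℝ}
    (hca : c ≤ a) (hbd : b ≤ d) (hab : a ≤ b) :
    sInf (f '' Set.Icc c d) ≤ sInf (f '' Set.Icc a b) :=
  csInf_le_csInf (img_bddBelow f hf c d) ((Set.nonempty_Icc.mpr hab).image f)
    (Set.image_mono (f := f) (Set.Icc_subset_Icc hca hbd))

private lemma sup_mono' {f : ℝ → ℝ} (hf : Continuous f) {a b c d : ℝ}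
    (hca : c ≤ a) (hbd : b ≤ d) (hab : a ≤ b) :
    sSup (f '' Set.Icc a b) ≤ sSup (f '' Set.Icc c d) :=
  csSup_le_csSup (img_bddAbove f hf c d) ((Set.nonempty_Icc.mpr hab).image f)
    (Set.image_mono (f := f) (Set.Icc_subset_Icc hca hbd))

private lemma inf_le' {f : ℝ → ℝ} (hf : Continuous f) {a b p : ℝ} (h : p ∈ Set.Icc a b) :
    sInf (f '' Set.Icc a b) ≤ f p :=
  csInf_le (img_bddBelow f hf a b) ⟨p, h, rfl⟩

private lemma le_sup' {f : ℝ → ℝ} (hf : Continuous f) {a b p : ℝ} (h : p ∈ Set.Icc a b) :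
    f p ≤ sSup (f '' Set.Icc a b) :=
  le_csSup (img_bddAbove f hf a b) ⟨p, h, rfl⟩

/-- Normalized two-branch formula for `godunovOp5`. -/
private lemma godunovOp5_eq (F : ℝ → ℝ → ℝ) (p₁ p₂ p₃ x : ℝ) :
    godunovOp5 F p₁ p₂ p₃ x =
      if max p₁ p₃ ≤ p₂ then
        sInf ((fun p => F p x) '' Set.Icc (min p₁ p₃) p₂)
      else
        sSup ((fun p => F p x) '' Set.Icc p₂ (max p₁ p₃)) := by
  unfold godunovOp5
  rcases le_or_gt (max p₁ p₃) p₂ with hA | hA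
  · rw [if_pos hA, if_pos hA]
    obtain ⟨h1, h3⟩ := max_le_iff.mp hA
    rw [min_eq_right h3, max_eq_left h3, max_eq_right h1]
  · rw [if_neg (not_le.mpr hA), if_neg (not_le.mpr hA)]
    rcases le_or_gt p₂ (min p₁ p₃) with hB | hB
    · rw [if_pos hB]
      obtain ⟨h1, h3⟩ := le_min_iff.mp hB
      rw [min_eq_left h3, min_eq_right h1, max_eq_right h3]
    · rw [if_neg (not_le.mpr hB)]
      rcases lt_max_iff.mp hA with h | h
      · -- p₂ < p₁, so the `p₁ < p₂ ∧ p₂ < p₃` branch is impossible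
        rw [if_neg (by rintro ⟨h', _⟩; exact absurd h (not_lt.mpr h'.le))]
        rw [max_eq_left (by rcases min_lt_iff.mp hB with h' | h' <;> linarith)]
      · rcases min_lt_iff.mp hB with h' | h'
        · rw [if_pos ⟨h', h⟩, max_eq_right (by linarith)]
        · exact absurd h (not_lt.mpr h'.le)

/-- Consistency and g-monotonicity of the Godunov-type operator `F̂₅`: if `p ↦ F(p,x)` is
continuous for each `x`, then `F̂₅(p,p,p,x) = F(p,x)` and `F̂₅` is nondecreasing in `p₁`,
nondecreasing in `p₃`, and nonincreasing in `p₂`. -/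
theorem godunovOp5_consistent_gmonotone (F : ℝ → ℝ → ℝ)
    (hF : ∀ x : ℝ, Continuous fun p => F p x) :
    (∀ p x : ℝ, godunovOp5 F p p p x = F p x) ∧
    (∀ p₂ p₃ x : ℝ, Monotone fun p₁ => godunovOp5 F p₁ p₂ p₃ x) ∧
    (∀ p₁ p₂ x : ℝ, Monotone fun p₃ => godunovOp5 F p₁ p₂ p₃ x) ∧
    (∀ p₁ p₃ x : ℝ, Antitone fun p₂ => godunovOp5 F p₁ p₂ p₃ x) := by
  refine ⟨?_, ?_, ?_, ?_⟩
  · intro p x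
    rw [godunovOp5_eq]
    simp [Set.Icc_self]
  · intro p₂ p₃ x a b hab
    simp only [godunovOp5_eq]
    by_cases hb : max b p₃ ≤ p₂
    · have ha : max a p₃ ≤ p₂ := le_trans (max_le_max hab le_rfl) hb
      rw [if_pos ha, if_pos hb]
      exact inf_mono' (hF x) (min_le_min hab le_rfl) le_rfl
        (le_trans (min_le_max) hb)
    · rw [if_neg hb]
      by_cases ha : max a p₃ ≤ p₂
      · rw [if_pos ha]
        calc sInf ((fun p => F p x) '' Set.Icc (min a p₃) p₂) ≤ F p₂ x :=
              inf_le' (hF x) ⟨le_trans (min_le_left _ _) (le_trans (le_max_left _ _) ha), le_rfl⟩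
          _ ≤ _ := le_sup' (hF x) ⟨le_rfl, (not_le.mp hb).le⟩
      · rw [if_neg ha]
        exact sup_mono' (hF x) le_rfl (max_le_max hab le_rfl) (not_le.mp ha).le
  · intro p₁ p₂ x a b hab
    simp only [godunovOp5_eq]
    by_cases hb : max p₁ b ≤ p₂
    · have ha : max p₁ a ≤ p₂ := le_trans (max_le_max le_rfl hab) hb
      rw [if_pos ha, if_pos hb]
      exact inf_mono' (hF x) (min_le_min le_rfl hab) le_rfl
        (le_trans (min_le_max) hb)
    · rw [if_neg hb]
      by_cases ha : max p₁ a ≤ p₂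
      · rw [if_pos ha]
        calc sInf ((fun p => F p x) '' Set.Icc (min p₁ a) p₂) ≤ F p₂ x :=
              inf_le' (hF x) ⟨le_trans (min_le_left _ _) (le_trans (le_max_left _ _) ha), le_rfl⟩
          _ ≤ _ := le_sup' (hF x) ⟨le_rfl, (not_le.mp hb).le⟩
      · rw [if_neg ha]
        exact sup_mono' (hF x) le_rfl (max_le_max le_rfl hab) (not_le.mp ha).le
  · intro p₁ p₃ x a b hab
    simp only [godunovOp5_eq]
    by_cases ha : max p₁ p₃ ≤ a
    · have hb : max p₁ p₃ ≤ b := le_trans ha hab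
      rw [if_pos ha, if_pos hb]
      exact inf_mono' (hF x) le_rfl hab (le_trans min_le_max ha)
    · rw [if_neg ha]
      by_cases hb : max p₁ p₃ ≤ b
      · rw [if_pos hb]
        calc sInf ((fun p => F p x) '' Set.Icc (min p₁ p₃) b) ≤ F (max p₁ p₃) x :=
              inf_le' (hF x) ⟨min_le_max, hb⟩
          _ ≤ _ := le_sup' (hF x) ⟨(not_le.mp ha).le, le_rfl⟩
      · rw [if_neg hb]
        exact sup_mono' (hF x) hab le_rfl (not_le.mp hb).le
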